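/- Let H be a Hermitian N×N matrix and v a unit vector. The orthogonal complement of the dark subspace relative to v equals the span of the orthogonal projections of v onto the eigenspaces of H; equivalently, ℂ^N decomposes orthogonally as the dark subspace plus the cyclic subspace generated by v under H (the span of {H^k v : k ≥ 0}). -/

import Mathlib

open scoped InnerProductSpace

/-- The dark subspace of a Hermitian matrix `H` relative to a target vector `v`:
the span of the eigenvectors of `H` orthogonal to `v`. -/
noncomputable def darkSubspace {N : ℕ} (H : Matrix (Fin N) (Fin N) ℂ)
    (v : EuclideanSpace ℂ (Fin N)) : Submodule ℂ (EuclideanSpace ℂ (Fin N)) :=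
  Submodule.span ℂ
    {x | x ≠ 0 ∧ (∃ μ : ℂ, Matrix.toEuclideanLin H x = μ • x) ∧ ⟪v, x⟫_ℂ = 0}

theorem dark_complement_eq_projections_eq_krylov
    (N : ℕ) (H : Matrix (Fin N) (Fin N) ℂ) (hH : H.IsHermitian)
    (v : EuclideanSpace ℂ (Fin N)) (hv : ‖v‖ = 1) :
    (darkSubspace H v)ᗮ =
      Submodule.span ℂ
        (Set.range fun μ : ℂ =>
          ((Submodule.orthogonalProjection
            (Module.End.eigenspace (Matrix.toEuclideanLin H) μ) v :
              EuclideanSpace ℂ (Fin N)))) ∧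
    (darkSubspace H v)ᗮ =
      Submodule.span ℂ
        (Set.range fun k : ℕ =>
          (Matrix.toEuclideanLin (H ^ k) v : EuclideanSpace ℂ (Fin N))) := by
  classical
  set T : Module.End ℂ (EuclideanSpace ℂ (Fin N)) := Matrix.toEuclideanLin H with hT_def
  have hT : T.IsSymmetric := Matrix.isHermitian_iff_isSymmetric.mp hH
  set E : ℂ → Submodule ℂ (EuclideanSpace ℂ (Fin N)) :=
    fun μ => Module.End.eigenspace T μ with hE_def
  set P : ℂ → EuclideanSpace ℂ (Fin N) :=
    fun μ => (Submodule.orthogonalProjection (E μ) v : EuclideanSpace ℂ (Fin N)) with hP_def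
  set D : Submodule ℂ (EuclideanSpace ℂ (Fin N)) := darkSubspace H v with hD_def
  set S : Submodule ℂ (EuclideanSpace ℂ (Fin N)) :=
    Submodule.span ℂ (Set.range P) with hS_def
  set K : Submodule ℂ (EuclideanSpace ℂ (Fin N)) :=
    Submodule.span ℂ (Set.range fun k : ℕ =>
      (Matrix.toEuclideanLin (H ^ k) v : EuclideanSpace ℂ (Fin N))) with hK_def
  -- orthogonality of distinct eigenspaces
  have horth : ∀ {μ ν : ℂ}, μ ≠ ν → ∀ x ∈ E μ, ∀ y ∈ E ν, ⟪x, y⟫_ℂ = 0 := by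
    intro μ ν hne x hx y hy
    exact hT.orthogonalFamily_eigenspaces hne (⟨x, hx⟩ : E μ) (⟨y, hy⟩ : E ν)
  -- key inner-product computation: projections of v are orthogonal to dark generators
  have projx : ∀ (μ : ℂ) (x : EuclideanSpace ℂ (Fin N)),
      (∃ ν : ℂ, T x = ν • x) → ⟪v, x⟫_ℂ = 0 → ⟪P μ, x⟫_ℂ = 0 := by
    rintro μ x ⟨ν, hx⟩ hvx
    have hxev : x ∈ E ν := Module.End.mem_eigenspace_iff.mpr hx
    rw [hP_def]
    show ⟪(E μ).starProjection v, x⟫_ℂ = 0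
    rw [Submodule.inner_starProjection_left_eq_right]
    by_cases hνμ : ν = μ
    · subst hνμ
      rw [Submodule.starProjection_eq_self_iff.mpr hxev]
      exact hvx
    · have hxo : x ∈ (E μ)ᗮ := by
        rw [Submodule.mem_orthogonal]
        intro u hu
        exact horth (fun h => hνμ h.symm) u hu x hxev
      rw [Submodule.starProjection_apply, Submodule.orthogonalProjectionOnto_apply_of_mem_orthogonal hxo]
      simp
  -- S ≤ Dᗮ
  have hSD : S ≤ Dᗮ := by
    rw [hS_def, Submodule.span_le]
    rintro _ ⟨μ, rfl⟩
    rw [SetLike.mem_coe, Submodule.mem_orthogonal']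
    intro u hu
    have hker : D ≤ LinearMap.ker (innerSL ℂ (P μ)).toLinearMap := by
      rw [hD_def, darkSubspace, Submodule.span_le]
      rintro x ⟨_, hxe, hvx⟩
      simpa using projx μ x hxe hvx
    simpa using hker hu
  -- v ∈ Dᗮ
  have hvD : v ∈ Dᗮ := by
    rw [Submodule.mem_orthogonal']
    intro u hu
    have hker : D ≤ LinearMap.ker (innerSL ℂ v).toLinearMap := by
      rw [hD_def, darkSubspace, Submodule.span_le]
      rintro x ⟨_, _, hvx⟩
      simpa using hvx
    simpa using hker hu
  -- D ⊔ S = ⊤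
  have htop : (⨆ μ : ℂ, E μ) = ⊤ :=
    Submodule.orthogonal_eq_bot_iff.mp hT.orthogonalComplement_iSup_eigenspaces_eq_bot
  have hsup : D ⊔ S = ⊤ := by
    rw [eq_top_iff, ← htop]
    refine iSup_le fun μ => ?_
    intro y hy
    by_cases hy0 : y = 0
    · simp [hy0]
    have hinner : ∀ z ∈ E μ, ⟪v, z⟫_ℂ = ⟪P μ, z⟫_ℂ := by
      intro z hz
      have h1 : ⟪v - P μ, z⟫_ℂ = 0 := Submodule.starProjection_inner_eq_zero v z hz
      rw [inner_sub_left, sub_eq_zero] at h1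
      exact h1
    have hPm : P μ ∈ E μ := SetLike.coe_mem _
    by_cases hp : P μ = 0
    · have hyD : y ∈ D := by
        apply Submodule.subset_span
        refine ⟨hy0, ⟨μ, Module.End.mem_eigenspace_iff.mp hy⟩, ?_⟩
        rw [hinner y hy, hp, inner_zero_left]
      exact Submodule.mem_sup_left hyD
    · set c : ℂ := ⟪P μ, y⟫_ℂ / ⟪P μ, P μ⟫_ℂ with hc_def
      have hpp : ⟪P μ, P μ⟫_ℂ ≠ 0 := fun h => hp (inner_self_eq_zero.mp h)
      set z : EuclideanSpace ℂ (Fin N) := y - c • P μ with hz_def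
      have hzE : z ∈ E μ := Submodule.sub_mem _ hy (Submodule.smul_mem _ _ hPm)
      have hvz : ⟪v, z⟫_ℂ = 0 := by
        rw [hinner z hzE, hz_def, inner_sub_right, inner_smul_right, hc_def,
          div_mul_cancel₀ _ hpp, sub_self]
      have hPS : P μ ∈ S := Submodule.subset_span ⟨μ, rfl⟩
      have hcPS : c • P μ ∈ S := Submodule.smul_mem _ _ hPS
      have hyz : y = z + c • P μ := by rw [hz_def]; abel
      by_cases hz0 : z = 0
      · rw [hyz, hz0, zero_add]
        exact Submodule.mem_sup_right hcPS
      · have hzD : z ∈ D := by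
          apply Submodule.subset_span
          exact ⟨hz0, ⟨μ, Module.End.mem_eigenspace_iff.mp hzE⟩, hvz⟩
        rw [hyz]
        exact Submodule.add_mem_sup hzD hcPS
  -- first equality by dimension count
  have h1 := Submodule.finrank_sup_add_finrank_inf_eq D S
  have h2 := Submodule.finrank_add_finrank_orthogonal D
  rw [hsup] at h1
  rw [finrank_top] at h1
  have hfin : Module.finrank ℂ Dᗮ ≤ Module.finrank ℂ S := by omega
  have hDS : Dᗮ = S := (Submodule.eq_of_le_of_finrank_le hSD hfin).symm
  -- matrix powers act like operator powers
  have hmul : ∀ (M : Matrix (Fin N) (Fin N) ℂ) (x : EuclideanSpace ℂ (Fin N)),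
      Matrix.toEuclideanLin (H * M) x = T (Matrix.toEuclideanLin M x) := by
    intro M x
    rw [hT_def]
    simp only [Matrix.toEuclideanLin_apply]
    rw [Matrix.mulVec_mulVec]
  have hpow : ∀ k : ℕ, Matrix.toEuclideanLin (H ^ k) v = (T ^ k) v := by
    intro k
    induction k with
    | zero => simp [Matrix.toEuclideanLin_apply]
    | succ k ih =>
      rw [pow_succ', hmul, ih, pow_succ', Module.End.mul_apply]
  -- K ≤ S
  have hvS : v ∈ S := hDS ▸ hvD
  have hTS : ∀ x ∈ S, T x ∈ S := by
    have hmap : Submodule.map T S ≤ S := by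
      rw [hS_def, Submodule.map_span, Submodule.span_le]
      rintro _ ⟨_, ⟨μ, rfl⟩, rfl⟩
      have hm : P μ ∈ E μ := SetLike.coe_mem _
      rw [Module.End.mem_eigenspace_iff.mp hm]
      exact Submodule.smul_mem _ _ (Submodule.subset_span ⟨μ, rfl⟩)
    intro x hx
    exact hmap ⟨x, hx, rfl⟩
  have hTkS : ∀ k : ℕ, (T ^ k) v ∈ S := by
    intro k
    induction k with
    | zero => simpa using hvS
    | succ k ih =>
      rw [pow_succ', Module.End.mul_apply]
      exact hTS _ ih
  have hKS : K ≤ S := by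
    rw [hK_def, Submodule.span_le]
    rintro _ ⟨k, rfl⟩
    simpa [hpow k] using hTkS k
  -- S ≤ K via Lagrange interpolation polynomials
  have hdim : Module.finrank ℂ (EuclideanSpace ℂ (Fin N)) = N := by
    simp [finrank_euclideanSpace]
  set u : OrthonormalBasis (Fin N) ℂ (EuclideanSpace ℂ (Fin N)) :=
    hT.eigenvectorBasis hdim with hu_def
  have hEig : ∀ i : Fin N,
      Module.End.HasEigenvector T ((hT.eigenvalues hdim i : ℝ) : ℂ) (u i) := fun i =>
    hT.hasEigenvector_eigenvectorBasis hdim i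
  set Λ : Finset ℂ := Finset.image (fun i : Fin N => ((hT.eigenvalues hdim i : ℝ) : ℂ))
    Finset.univ with hΛ_def
  have hspan_u : Submodule.span ℂ (Set.range ⇑u) = ⊤ := by
    have := u.toBasis.span_eq
    rwa [OrthonormalBasis.coe_toBasis] at this
  have hTkK : ∀ k : ℕ, (T ^ k) v ∈ K := by
    intro k
    rw [← hpow k]
    exact Submodule.subset_span ⟨k, rfl⟩
  have hSK : S ≤ K := by
    rw [hS_def, Submodule.span_le]
    rintro _ ⟨μ, rfl⟩
    rw [SetLike.mem_coe]
    by_cases hμ : μ ∈ Λ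
    · -- Lagrange polynomial projecting onto the μ-eigenspace
      set p : Polynomial ℂ := Lagrange.basis Λ id μ with hp_def
      have hself : p.eval μ = 1 := Lagrange.eval_basis_self (Set.injOn_id _) hμ
      have hne : ∀ ν ∈ Λ, ν ≠ μ → p.eval ν = 0 := by
        intro ν hν hneμ
        rw [hp_def]
        exact Lagrange.eval_basis_of_ne (v := id) (i := μ) (j := ν)
          (fun h => hneμ h.symm) hν
      set L : EuclideanSpace ℂ (Fin N) →ₗ[ℂ] EuclideanSpace ℂ (Fin N) :=
        Polynomial.aeval T p - (E μ).subtype ∘ₗ (Submodule.orthogonalProjection (E μ)).toLinearMap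
        with hL_def
      have hLu : ∀ i : Fin N, L (u i) = 0 := by
        intro i
        have haev : (Polynomial.aeval T p) (u i)
            = p.eval ((hT.eigenvalues hdim i : ℝ) : ℂ) • u i :=
          Module.End.aeval_apply_of_hasEigenvector (hEig i)
        rw [hL_def, LinearMap.sub_apply, LinearMap.comp_apply, haev]
        by_cases hlam : ((hT.eigenvalues hdim i : ℝ) : ℂ) = μ
        · have huE : u i ∈ E μ := hlam ▸ (hEig i).1
          simp only [Submodule.subtype_apply, ContinuousLinearMap.coe_coe]
          rw [← Submodule.starProjection_apply, Submodule.starProjection_eq_self_iff.mpr huE, hlam, hself, one_smul, sub_self]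
        · have huo : u i ∈ (E μ)ᗮ := by
            rw [Submodule.mem_orthogonal]
            intro w hw
            exact horth (Ne.symm hlam) w hw (u i) (hEig i).1
          simp only [Submodule.subtype_apply, ContinuousLinearMap.coe_coe]
          rw [Submodule.orthogonalProjectionOnto_apply_of_mem_orthogonal huo]
          rw [hne _ (Finset.mem_image_of_mem _ (Finset.mem_univ i)) hlam]
          simp
      have hL0 : L v = 0 := by
        have hker : (⊤ : Submodule ℂ (EuclideanSpace ℂ (Fin N))) ≤ LinearMap.ker L := by
          rw [← hspan_u, Submodule.span_le]
          rintro _ ⟨i, rfl⟩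
          exact hLu i
        exact hker (Submodule.mem_top)
      have hPv : P μ = (Polynomial.aeval T p) v := by
        have := hL0
        rw [hL_def, LinearMap.sub_apply, sub_eq_zero] at this
        simpa [hP_def] using this.symm
      rw [hPv, Polynomial.aeval_eq_sum_range, LinearMap.sum_apply]
      apply Submodule.sum_mem
      intro k _
      rw [LinearMap.smul_apply]
      exact Submodule.smul_mem _ _ (hTkK k)
    · -- μ is not an eigenvalue: the eigenspace is trivial
      have hEbot : E μ = ⊥ := by
        rw [Submodule.eq_bot_iff]
        intro x hx
        have hxo : ∀ i : Fin N, u i ∈ (Submodule.span ℂ {x})ᗮ := by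
          intro i
          rw [Submodule.mem_orthogonal]
          intro w hw
          rw [Submodule.mem_span_singleton] at hw
          obtain ⟨a, rfl⟩ := hw
          have hlam : ((hT.eigenvalues hdim i : ℝ) : ℂ) ≠ μ := by
            intro h
            exact hμ (h ▸ Finset.mem_image_of_mem _ (Finset.mem_univ i))
          rw [inner_smul_left]
          rw [horth (fun h => hlam h.symm) x hx (u i) (hEig i).1]
          ring
        have hle : Submodule.span ℂ (Set.range ⇑u) ≤ (Submodule.span ℂ {x})ᗮ := by
          rw [Submodule.span_le]
          rintro _ ⟨i, rfl⟩
          exact hxo i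
        rw [hspan_u] at hle
        have hxx : x ∈ (Submodule.span ℂ {x})ᗮ := hle Submodule.mem_top
        have : ⟪x, x⟫_ℂ = 0 := by
          rw [Submodule.mem_orthogonal] at hxx
          exact hxx x (Submodule.mem_span_singleton_self x)
        exact inner_self_eq_zero.mp this
      have hv' : v ∈ (E μ)ᗮ := by
        rw [hEbot, Submodule.bot_orthogonal_eq_top]
        trivial
      have hP0 : P μ = 0 := by
        simp only [hP_def]
        rw [Submodule.orthogonalProjectionOnto_apply_of_mem_orthogonal hv']
        simp
      rw [hP0]
      exact Submodule.zero_mem K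
  exact ⟨hDS, hDS.trans (le_antisymm hSK hKS)⟩
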